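/- Let n ≥ 1 and k ≥ 0, and let P^n be a coherent exchangeable lower prevision on ℒ(𝒳^n) with count distribution Q^n(h) := P^n(h∘T^n). For a gamble g on 𝒩^n define ḡ ∈ ℒ(𝒩^{n+k}) by ḡ(μ) := Σ_{m∈𝒩^n} (ν(m)·ν(μ−m)/ν(μ))·g(m), where ν(μ−m) := 0 unless m ≤ μ componentwise. Then there exists a coherent exchangeable lower prevision on ℒ(𝒳^{n+k}) that dominates the assessments f̃ ↦ P^n(f) for all gambles f on 𝒳^n (f̃ the cylindrical extension of f to 𝒳^{n+k}) if and only if max_{μ∈𝒩^{n+k}} ḡ(μ) ≥ Q^n(g) for every gamble g on 𝒩^n. -/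

import Mathlib

open Finset Filter Topology

/-- A coherent lower prevision on the gambles over a finite nonempty space `Ω`. -/
def LowerPrevCoherent {Ω : Type*} [Fintype Ω] [Nonempty Ω] (P : (Ω → ℝ) → ℝ) : Prop :=
  (∀ f : Ω → ℝ, sInf (Set.range f) ≤ P f) ∧
  (∀ (f : Ω → ℝ) (l : ℝ), 0 ≤ l → P (fun ω => l * f ω) = l * P f) ∧
  (∀ f g : Ω → ℝ, P f + P g ≤ P (f + g))

/-- A linear prevision on the gambles over a finite nonempty space `Ω`. -/
def LinearPrevision {Ω : Type*} [Fintype Ω] [Nonempty Ω] (P : (Ω → ℝ) → ℝ) : Prop :=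
  (∀ f g : Ω → ℝ, P (f + g) = P f + P g) ∧
  (∀ (l : ℝ) (f : Ω → ℝ), P (fun ω => l * f ω) = l * P f) ∧
  (∀ f : Ω → ℝ, (∀ ω, 0 ≤ f ω) → 0 ≤ P f) ∧
  P (fun _ => 1) = 1

/-- Exchangeability of a lower prevision on gambles on `X^N`:
`P (πf − f) ≥ 0` for every gamble `f` and every permutation `π`. -/
def Exchangeable {X : Type*} {N : ℕ} (P : ((Fin N → X) → ℝ) → ℝ) : Prop :=
  ∀ (f : (Fin N → X) → ℝ) (π : Equiv.Perm (Fin N)),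
    0 ≤ P (fun x => f (fun k => x (π k)) - f x)

/-- The set of count vectors `𝒩^n`. -/
abbrev CVec (X : Type*) [Fintype X] (n : ℕ) : Type _ := {m : X → ℕ // ∑ x, m x = n}

noncomputable instance {X : Type*} [Fintype X] [DecidableEq X] (n : ℕ) : Fintype (CVec X n) := by
  have key : ∀ (m : CVec X n) (x : X), m.1 x < n + 1 := by
    intro m x
    have h1 : m.1 x ≤ ∑ y, m.1 y :=
      Finset.single_le_sum (fun i _ => Nat.zero_le _) (Finset.mem_univ x)
    have h2 := m.2
    omega
  exact Fintype.ofInjective (fun m : CVec X n => fun x => (⟨m.1 x, key m x⟩ : Fin (n+1)))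
    (fun a b hab => Subtype.ext (funext fun x => congrArg Fin.val (congrFun hab x)))

instance {X : Type*} [Fintype X] [DecidableEq X] [Nonempty X] (n : ℕ) :
    Nonempty (CVec X n) :=
  ⟨⟨fun x => if x = Classical.arbitrary X then n else 0, by simp⟩⟩

/-- The counting map `T^n : X^n → 𝒩^n`. -/
def countMap {X : Type*} [Fintype X] [DecidableEq X] (n : ℕ) (z : Fin n → X) : CVec X n :=
  ⟨fun x => (Finset.univ.filter fun k => z k = x).card, by
    have h := Finset.card_eq_sum_card_fiberwise (f := z) (s := Finset.univ) (t := Finset.univ)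
      (fun k _ => Finset.mem_univ (z k))
    simpa using h.symm⟩

/-- `ν(m) = n!/∏ₓ mₓ!` for a count vector `m ∈ 𝒩^n`. -/
def nu {X : Type*} [Fintype X] {n : ℕ} (m : CVec X n) : ℕ :=
  Nat.multinomial Finset.univ m.1

/-- `ν(μ − m)`, which is `0` unless `m ≤ μ` componentwise. -/
def nuSub {X : Type*} [Fintype X] {n k : ℕ} (μ : CVec X (n + k)) (m : CVec X n) : ℕ :=
  if ∀ x, m.1 x ≤ μ.1 x then Nat.multinomial Finset.univ (fun x => μ.1 x - m.1 x) else 0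

/-- The multiple hyper-geometric prevision `MuHy^n(f|m) = (1/ν(m)) ∑_{z∈[m]} f(z)`. -/
noncomputable def MuHy {X : Type*} [Fintype X] [DecidableEq X] {n : ℕ}
    (f : (Fin n → X) → ℝ) (m : CVec X n) : ℝ :=
  (∑ z ∈ Finset.univ.filter fun z : Fin n → X => countMap n z = m, f z) / (nu m : ℝ)

/-- The `X`-simplex `Σ_X`, as a subtype of `X → ℝ`. -/
abbrev SimplexPt (X : Type*) [Fintype X] : Type _ :=
  {θ : X → ℝ // (∀ x, 0 ≤ θ x) ∧ ∑ x, θ x = 1}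

/-- The Bernstein basis polynomial `B_m(θ) = ν(m) ∏ₓ θₓ^{mₓ}`. -/
noncomputable def Bern {X : Type*} [Fintype X] {n : ℕ} (m : CVec X n) (θ : X → ℝ) : ℝ :=
  (nu m : ℝ) * ∏ x, θ x ^ m.1 x

/-- The count multinomial expectation `CoMn^n(g|θ) = ∑_m g(m) B_m(θ)`. -/
noncomputable def CoMn {X : Type*} [Fintype X] [DecidableEq X] {n : ℕ} (g : CVec X n → ℝ) (θ : X → ℝ) : ℝ :=
  ∑ m : CVec X n, g m * Bern m θ

/-- The multinomial expectation `Mn^n(f|θ) = ∑_z f(z) ∏ₓ θₓ^{Tₓ(z)}`. -/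
noncomputable def Mn {X : Type*} [Fintype X] [DecidableEq X] {n : ℕ}
    (f : (Fin n → X) → ℝ) (θ : X → ℝ) : ℝ :=
  ∑ z : Fin n → X, f z * ∏ x, θ x ^ (countMap n z).1 x

/-- `CoMn^n(g|·)` as a function on the simplex. -/
noncomputable def CoMnP {X : Type*} [Fintype X] [DecidableEq X] {n : ℕ} (g : CVec X n → ℝ)
    (θ : SimplexPt X) : ℝ :=
  CoMn g θ.1

/-- `Mn^n(f|·)` as a function on the simplex. -/
noncomputable def MnP {X : Type*} [Fintype X] [DecidableEq X] {n : ℕ}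
    (f : (Fin n → X) → ℝ) (θ : SimplexPt X) : ℝ :=
  Mn f θ.1

/-- Polynomial gambles on the simplex: the set `𝒱(Σ_X)`. -/
def IsPolyGamble {X : Type*} [Fintype X] [DecidableEq X] (p : SimplexPt X → ℝ) : Prop :=
  ∃ n : ℕ, 1 ≤ n ∧ ∃ g : CVec X n → ℝ, p = fun θ => CoMnP g θ

/-- Coherence of a functional on the linear space `𝒱(Σ_X)` of polynomial gambles. -/
def CoherentOnPoly {X : Type*} [Fintype X] [DecidableEq X] (S : (SimplexPt X → ℝ) → ℝ) : Prop :=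
  (∀ p, IsPolyGamble p → sInf (Set.range p) ≤ S p) ∧
  (∀ p, IsPolyGamble p → ∀ l : ℝ, 0 ≤ l → S (fun θ => l * p θ) = l * S p) ∧
  (∀ p q, IsPolyGamble p → IsPolyGamble q → S p + S q ≤ S (p + q))

/-- Cylindrical extension of a gamble on `X^n` to `X^{n+k}`. -/
def cylExt {X : Type*} {n k : ℕ} (f : (Fin n → X) → ℝ) : (Fin (n + k) → X) → ℝ :=
  fun z => f fun i => z (Fin.castLE (Nat.le_add_right n k) i)

/-- Time consistency of a family of lower previsions on the `X^n`. -/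
def PTimeConsistent {X : Type*} (P : ∀ n : ℕ, ((Fin n → X) → ℝ) → ℝ) : Prop :=
  ∀ n : ℕ, 1 ≤ n → ∀ (k : ℕ) (f : (Fin n → X) → ℝ), P n f = P (n + k) (cylExt f)

/-- Time consistency of a family of count lower previsions on the `𝒩^n`. -/
def QTimeConsistent {X : Type*} [Fintype X] [DecidableEq X] (Q : ∀ n : ℕ, (CVec X n → ℝ) → ℝ) : Prop :=
  ∀ n : ℕ, 1 ≤ n → ∀ (k : ℕ) (h : CVec X n → ℝ),
    Q n h = Q (n + k) (fun μ => ∑ m : CVec X n, ((nuSub μ m : ℝ) * (nu m : ℝ) / (nu μ : ℝ)) * h m)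

/-- The relative frequency vector `m/n ∈ Σ_X` of a count vector `m ∈ 𝒩^n`, `n ≥ 1`. -/
noncomputable def freqPt {X : Type*} [Fintype X] {n : ℕ} (hn : 0 < n) (m : CVec X n) :
    SimplexPt X :=
  ⟨fun x => (m.1 x : ℝ) / n,
   fun x => div_nonneg (Nat.cast_nonneg _) (Nat.cast_nonneg _),
   by
    rw [← Finset.sum_div]
    have h : (∑ x, (m.1 x : ℝ)) = (n : ℝ) := by exact_mod_cast m.2
    rw [h]
    exact div_self (Nat.cast_ne_zero.mpr hn.ne')⟩

/-- `ḡ(μ) = ∑_m (ν(m) ν(μ−m) / ν(μ)) g(m)`. -/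
noncomputable def gbar {X : Type*} [Fintype X] [DecidableEq X] {n k : ℕ}
    (g : CVec X n → ℝ) (μ : CVec X (n + k)) : ℝ :=
  ∑ m : CVec X n, ((nu m : ℝ) * (nuSub μ m : ℝ) / (nu μ : ℝ)) * g m


/-! ### Auxiliary combinatorial lemmas -/

section Aux

variable {X : Type*} [Fintype X] [DecidableEq X]

lemma countMap_comp_perm {N : ℕ} (z : Fin N → X) (π : Equiv.Perm (Fin N)) :
    countMap N (z ∘ π) = countMap N z := by
  apply Subtype.ext; funext x
  show (Finset.univ.filter fun k => (z ∘ π) k = x).card = (Finset.univ.filter fun k => z k = x).card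
  exact Finset.card_bij (fun k _ => π k) (fun k hk => by simpa using (Finset.mem_filter.mp hk).2)
    (fun a _ b _ h => π.injective h)
    (fun b hb => ⟨π.symm b, by simpa using (Finset.mem_filter.mp hb).2, by simp⟩)

/-- Permutations carrying `z` to `y` correspond to families of fiber bijections. -/
def permFiberEquiv {N : ℕ} (z y : Fin N → X) :
    {π : Equiv.Perm (Fin N) // z ∘ π = y} ≃
      (∀ x : X, {k : Fin N // y k = x} ≃ {k : Fin N // z k = x}) where
  toFun := fun π x =>
    { toFun := fun k => ⟨π.1 k.1, by rw [show z (π.1 k.1) = y k.1 from congrFun π.2 k.1]; exact k.2⟩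
      invFun := fun j => ⟨π.1.symm j.1, by
        rw [show y (π.1.symm j.1) = z (π.1 (π.1.symm j.1)) from (congrFun π.2 _).symm]
        simpa using j.2⟩
      left_inv := fun k => by simp
      right_inv := fun j => by simp }
  invFun := fun e =>
    ⟨(Equiv.sigmaFiberEquiv y).symm.trans ((Equiv.sigmaCongrRight e).trans (Equiv.sigmaFiberEquiv z)),
     funext fun k => (e (y k) ⟨k, rfl⟩).2⟩
  left_inv := fun π => by
    apply Subtype.ext; apply Equiv.ext; intro k; rfl
  right_inv := fun e => by
    funext x; apply Equiv.ext; rintro ⟨k, rfl⟩; rfl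

lemma card_perm_fiber {N : ℕ} (z y : Fin N → X) (h : countMap N y = countMap N z) :
    (Finset.univ.filter fun π : Equiv.Perm (Fin N) => z ∘ π = y).card
      = ∏ x, ((countMap N z).1 x).factorial := by
  rw [← Fintype.card_subtype, Fintype.card_congr (permFiberEquiv z y), Fintype.card_pi]
  refine Finset.prod_congr rfl fun x _ => ?_
  have hc : Fintype.card {k // y k = x} = Fintype.card {k // z k = x} := by
    rw [Fintype.card_subtype, Fintype.card_subtype]
    exact congrFun (congrArg Subtype.val h) x
  rw [Fintype.card_equiv (Fintype.equivOfCardEq hc), hc, Fintype.card_subtype]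
  rfl

lemma sum_perm_eq {M : Type*} [AddCommMonoid M] {N : ℕ} (z : Fin N → X) (f : (Fin N → X) → M) :
    ∑ π : Equiv.Perm (Fin N), f (z ∘ π)
      = (∏ x, ((countMap N z).1 x).factorial) •
          ∑ y ∈ Finset.univ.filter (fun y => countMap N y = countMap N z), f y := by
  rw [← Finset.sum_fiberwise (g := fun π : Equiv.Perm (Fin N) => z ∘ π)
        (f := fun π => f (z ∘ π))]
  have key : ∀ y : Fin N → X,
      (∑ π ∈ Finset.univ.filter (fun π : Equiv.Perm (Fin N) => z ∘ π = y), f (z ∘ π))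
      = if countMap N y = countMap N z then (∏ x, ((countMap N z).1 x).factorial) • f y else 0 := by
    intro y
    have h1 : ∀ π ∈ Finset.univ.filter (fun π : Equiv.Perm (Fin N) => z ∘ π = y),
        f (z ∘ π) = f y := fun π hπ => by rw [(Finset.mem_filter.mp hπ).2]
    rw [Finset.sum_congr rfl h1, Finset.sum_const]
    by_cases h : countMap N y = countMap N z
    · rw [if_pos h, card_perm_fiber z y h]
    · rw [if_neg h]
      have he : (Finset.univ.filter fun π : Equiv.Perm (Fin N) => z ∘ π = y) = ∅ := by
        refine Finset.filter_eq_empty_iff.mpr fun {π} _ hc => h ?_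
        rw [← hc]; exact (countMap_comp_perm z π).symm ▸ rfl
      rw [he]; simp
  rw [Finset.sum_congr rfl (fun y _ => key y), ← Finset.sum_filter, Finset.smul_sum]

/-- Fiber of `Sigma.fst`. -/
def sigmaFstFiber {β : X → Type*} (x : X) : {s : Σ i : X, β i // s.1 = x} ≃ β x where
  toFun := fun s => cast (congrArg β s.2) s.1.2
  invFun := fun b => ⟨⟨x, b⟩, rfl⟩
  left_inv := by rintro ⟨⟨i, b⟩, rfl⟩; rfl
  right_inv := fun b => rfl

lemma exists_countMap_eq {N : ℕ} (m : CVec X N) : ∃ z : Fin N → X, countMap N z = m := by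
  have hcard : Fintype.card (Σ x : X, Fin (m.1 x)) = Fintype.card (Fin N) := by
    simp [Fintype.card_sigma, m.2]
  obtain ⟨e⟩ : Nonempty (Fin N ≃ Σ x : X, Fin (m.1 x)) := ⟨Fintype.equivOfCardEq hcard.symm⟩
  refine ⟨fun k => (e k).1, Subtype.ext (funext fun x => ?_)⟩
  show (Finset.univ.filter fun k => (e k).1 = x).card = m.1 x
  rw [← Fintype.card_subtype]
  have e2 : {k : Fin N // (e k).1 = x} ≃ Fin (m.1 x) :=
    (e.subtypeEquiv fun k => Iff.rfl).trans (sigmaFstFiber x)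
  rw [Fintype.card_congr e2, Fintype.card_fin]

lemma nu_pos {N : ℕ} (m : CVec X N) : 0 < nu m := Nat.multinomial_pos _ _

lemma prod_factorial_mul_nu {N : ℕ} (m : CVec X N) :
    (∏ x, (m.1 x).factorial) * nu m = N.factorial := by
  have := Nat.multinomial_spec (Finset.univ : Finset X) m.1
  rwa [m.2] at this

lemma card_orbit {N : ℕ} (m : CVec X N) :
    (Finset.univ.filter fun z : Fin N → X => countMap N z = m).card = nu m := by
  obtain ⟨z, rfl⟩ := exists_countMap_eq m
  have h := sum_perm_eq (M := ℕ) z (fun _ => 1)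
  simp only [Finset.sum_const, Finset.card_univ, Fintype.card_perm, Fintype.card_fin,
    smul_eq_mul, mul_one] at h
  have h2 := prod_factorial_mul_nu (countMap N z)
  have hp : 0 < ∏ x, ((countMap N z).1 x).factorial :=
    Finset.prod_pos fun x _ => Nat.factorial_pos _
  exact Nat.eq_of_mul_eq_mul_left hp (by rw [← h, h2])

/-! ### MuHy lemmas -/

lemma sum_orbit_eq {N : ℕ} (f : (Fin N → X) → ℝ) (m : CVec X N) :
    ∑ z ∈ Finset.univ.filter (fun z : Fin N → X => countMap N z = m), f z
      = (nu m : ℝ) * MuHy f m := by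
  rw [MuHy, mul_div_cancel₀]
  exact Nat.cast_ne_zero.mpr (nu_pos m).ne'

lemma MuHy_add {N : ℕ} (f g : (Fin N → X) → ℝ) (m : CVec X N) :
    MuHy (f + g) m = MuHy f m + MuHy g m := by
  rw [MuHy, MuHy, MuHy, ← add_div, ← Finset.sum_add_distrib]
  rfl

lemma MuHy_smul {N : ℕ} (l : ℝ) (f : (Fin N → X) → ℝ) (m : CVec X N) :
    MuHy (fun z => l * f z) m = l * MuHy f m := by
  rw [MuHy, MuHy, ← Finset.mul_sum, mul_div_assoc]

lemma MuHy_const {N : ℕ} (c : ℝ) (m : CVec X N) :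
    MuHy (fun _ => c) m = c := by
  rw [MuHy, Finset.sum_const, card_orbit, nsmul_eq_mul, mul_comm, mul_div_assoc,
    div_self (Nat.cast_ne_zero.mpr (nu_pos m).ne'), mul_one]

lemma le_MuHy {N : ℕ} {c : ℝ} {f : (Fin N → X) → ℝ} (h : ∀ z, c ≤ f z) (m : CVec X N) :
    c ≤ MuHy f m := by
  rw [MuHy, le_div_iff₀ (by exact_mod_cast nu_pos m)]
  calc c * (nu m : ℝ) = ∑ _z ∈ Finset.univ.filter (fun z : Fin N → X => countMap N z = m), c := by
        rw [Finset.sum_const, card_orbit, nsmul_eq_mul, mul_comm]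
    _ ≤ _ := Finset.sum_le_sum fun z _ => h z

lemma MuHy_comp_count {N : ℕ} (g : CVec X N → ℝ) (m : CVec X N) :
    MuHy (fun z => g (countMap N z)) m = g m := by
  rw [MuHy]
  have : ∀ z ∈ Finset.univ.filter (fun z : Fin N → X => countMap N z = m),
      g (countMap N z) = g m := fun z hz => by rw [(Finset.mem_filter.mp hz).2]
  rw [Finset.sum_congr rfl this, Finset.sum_const, card_orbit, nsmul_eq_mul, mul_comm,
    mul_div_assoc, div_self (Nat.cast_ne_zero.mpr (nu_pos m).ne'), mul_one]

lemma MuHy_perm {N : ℕ} (f : (Fin N → X) → ℝ) (π : Equiv.Perm (Fin N)) (m : CVec X N) :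
    MuHy (fun z => f (fun k => z (π k))) m = MuHy f m := by
  rw [MuHy, MuHy]
  congr 1
  refine Finset.sum_nbij' (fun z => z ∘ π) (fun z => z ∘ π.symm) ?_ ?_ ?_ ?_ ?_
  · intro z hz
    simp only [Finset.mem_filter, Finset.mem_univ, true_and] at hz ⊢
    rw [countMap_comp_perm, hz]
  · intro z hz
    simp only [Finset.mem_filter, Finset.mem_univ, true_and] at hz ⊢
    rw [countMap_comp_perm, hz]
  · intro z _; funext k; simp
  · intro z _; funext k; simp
  · intro z _; rfl

lemma sum_perm_eq_MuHy {N : ℕ} (f : (Fin N → X) → ℝ) (z : Fin N → X) :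
    ∑ π : Equiv.Perm (Fin N), f (z ∘ π) = (N.factorial : ℝ) * MuHy f (countMap N z) := by
  rw [sum_perm_eq, sum_orbit_eq, nsmul_eq_mul, ← mul_assoc]
  congr 1
  rw [← Nat.cast_mul, prod_factorial_mul_nu]

/-! ### Coherence consequences -/

lemma coh_zero {Ω : Type*} [Fintype Ω] [Nonempty Ω] {P : (Ω → ℝ) → ℝ}
    (hP : LowerPrevCoherent P) : P 0 = 0 := by
  have h := hP.2.1 (0 : Ω → ℝ) 0 le_rfl
  have e : (fun ω : Ω => (0:ℝ) * (0 : Ω → ℝ) ω) = (0 : Ω → ℝ) := by funext ω; simp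
  rw [e, zero_mul] at h
  exact h

lemma coh_const {Ω : Type*} [Fintype Ω] [Nonempty Ω] {P : (Ω → ℝ) → ℝ}
    (hP : LowerPrevCoherent P) (c : ℝ) : P (fun _ => c) = c := by
  have hinf : ∀ d : ℝ, d ≤ P (fun _ => d) := by
    intro d
    have := hP.1 (fun _ => d)
    have hr : Set.range (fun _ : Ω => d) = {d} := Set.range_const
    rwa [hr, csInf_singleton] at this
  refine le_antisymm ?_ (hinf c)
  have hsum := hP.2.2 (fun _ => c) (fun _ => -c)
  have h0 : ((fun _ : Ω => c) + fun _ : Ω => -c) = (0 : Ω → ℝ) := by funext ω; simp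
  rw [h0, coh_zero hP] at hsum
  have := hinf (-c)
  linarith

lemma coh_mono {Ω : Type*} [Fintype Ω] [Nonempty Ω] {P : (Ω → ℝ) → ℝ}
    (hP : LowerPrevCoherent P) {f g : Ω → ℝ} (h : ∀ ω, f ω ≤ g ω) : P f ≤ P g := by
  have hsum := hP.2.2 f (g - f)
  have h0 : f + (g - f) = g := by funext ω; simp
  rw [h0] at hsum
  have hinf : (0:ℝ) ≤ P (g - f) := by
    refine le_trans ?_ (hP.1 (g - f))
    refine le_csInf ⟨(g - f) (Classical.arbitrary Ω), Set.mem_range_self _⟩ ?_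
    rintro b ⟨ω, rfl⟩
    simpa using h ω
  linarith

lemma coh_sum_le {Ω : Type*} [Fintype Ω] [Nonempty Ω] {P : (Ω → ℝ) → ℝ}
    (hP : LowerPrevCoherent P) {ι : Type*} (s : Finset ι) (g : ι → Ω → ℝ) :
    ∑ i ∈ s, P (g i) ≤ P (∑ i ∈ s, g i) := by
  classical
  induction s using Finset.cons_induction with
  | empty => simp [coh_zero hP]
  | cons a s ha ih =>
    rw [Finset.sum_cons, Finset.sum_cons]
    calc P (g a) + ∑ i ∈ s, P (g i) ≤ P (g a) + P (∑ i ∈ s, g i) := by linarith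
      _ ≤ _ := hP.2.2 _ _

/-- Representation: a coherent exchangeable lower prevision equals its value on the
symmetrized gamble. -/
lemma coh_exch_rep [Nonempty X] {N : ℕ} {P : ((Fin N → X) → ℝ) → ℝ}
    (hP : LowerPrevCoherent P) (hex : Exchangeable P) (f : (Fin N → X) → ℝ) :
    P f = P (fun z => MuHy f (countMap N z)) := by
  set S : (Fin N → X) → ℝ := fun z => MuHy f (countMap N z) with hS
  have hNf : (0:ℝ) < (N.factorial : ℝ) := by exact_mod_cast N.factorial_pos
  have hsum : (fun z => (N.factorial : ℝ) * S z) = ∑ π : Equiv.Perm (Fin N), (fun z => f (z ∘ π)) := by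
    funext z
    rw [Finset.sum_apply]
    exact (sum_perm_eq_MuHy f z).symm
  have hge : P f ≤ P S := by
    have h1 : (N.factorial : ℝ) * P S = P (fun z => (N.factorial : ℝ) * S z) :=
      (hP.2.1 S _ hNf.le).symm
    have h2 : ∑ π : Equiv.Perm (Fin N), P (fun z => f (z ∘ π))
        ≤ P (∑ π : Equiv.Perm (Fin N), (fun z => f (z ∘ π))) := coh_sum_le hP _ _
    have h3 : ∀ π : Equiv.Perm (Fin N), P f ≤ P (fun z => f (z ∘ π)) := by
      intro π
      have hadd := hP.2.2 f (fun z => f (z ∘ π) - f z)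
      have h0 : (f + fun z => f (z ∘ π) - f z) = fun z => f (z ∘ π) := by funext z; simp
      rw [h0] at hadd
      have hexx := hex f π
      have : (fun x => f (fun k => x (π k)) - f x) = (fun z => f (z ∘ π) - f z) := rfl
      rw [this] at hexx
      linarith
    have h4 : (N.factorial : ℝ) * P f ≤ ∑ π : Equiv.Perm (Fin N), P (fun z => f (z ∘ π)) := by
      calc (N.factorial : ℝ) * P f = ∑ _π : Equiv.Perm (Fin N), P f := by
            rw [Finset.sum_const, Finset.card_univ, Fintype.card_perm, Fintype.card_fin,
              nsmul_eq_mul]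
        _ ≤ _ := Finset.sum_le_sum fun π _ => h3 π
    rw [← hsum] at h2
    have : (N.factorial : ℝ) * P f ≤ (N.factorial : ℝ) * P S := by
      rw [h1]; linarith
    exact le_of_mul_le_mul_left this hNf
  have hle : P S ≤ P f := by
    have hdiff : (0:ℝ) ≤ P (f - S) := by
      have hT : (fun z => (N.factorial : ℝ) * (f - S) z)
          = ∑ π : Equiv.Perm (Fin N), (fun z => f z - f (z ∘ π)) := by
        funext z
        rw [Finset.sum_apply]
        have : ∑ π : Equiv.Perm (Fin N), (f z - f (z ∘ π))
            = (∑ _π : Equiv.Perm (Fin N), f z) - ∑ π : Equiv.Perm (Fin N), f (z ∘ π) := by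
          rw [Finset.sum_sub_distrib]
        rw [this, sum_perm_eq_MuHy f z, Finset.sum_const, Finset.card_univ, Fintype.card_perm,
          Fintype.card_fin, nsmul_eq_mul]
        simp [hS, mul_sub]
      have h1 : (N.factorial : ℝ) * P (f - S) = P (fun z => (N.factorial : ℝ) * (f - S) z) :=
        (hP.2.1 (f - S) _ hNf.le).symm
      have h2 : ∑ π : Equiv.Perm (Fin N), P (fun z => f z - f (z ∘ π))
          ≤ P (∑ π : Equiv.Perm (Fin N), (fun z => f z - f (z ∘ π))) := coh_sum_le hP _ _
      have h3 : ∀ π : Equiv.Perm (Fin N), (0:ℝ) ≤ P (fun z => f z - f (z ∘ π)) := by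
        intro π
        have hexx := hex (fun z => -f z) π
        have : (fun x => (fun z => -f z) (fun k => x (π k)) - (fun z => -f z) x)
            = (fun z => f z - f (z ∘ π)) := by funext z; show -f (z ∘ π) - -f z = _; ring
        rwa [this] at hexx
      have h4 : (0:ℝ) ≤ ∑ π : Equiv.Perm (Fin N), P (fun z => f z - f (z ∘ π)) :=
        Finset.sum_nonneg fun π _ => h3 π
      rw [← hT] at h2
      nlinarith
    have hadd := hP.2.2 S (f - S)
    have h0 : S + (f - S) = f := by funext z; simp
    rw [h0] at hadd
    linarith
  exact le_antisymm hge hle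

/-! ### Marginalization -/

lemma countMap_add_split {n k : ℕ} (w : Fin (n + k) → X) (x : X) :
    (countMap (n + k) w).1 x
      = (countMap n (fun i => w (Fin.castAdd k i))).1 x
        + (countMap k (fun i => w (Fin.natAdd n i))).1 x := by
  show (Finset.univ.filter fun i : Fin (n+k) => w i = x).card
      = (Finset.univ.filter fun i : Fin n => w (Fin.castAdd k i) = x).card
        + (Finset.univ.filter fun i : Fin k => w (Fin.natAdd n i) = x).card
  rw [Finset.card_filter, Finset.card_filter, Finset.card_filter, Fin.sum_univ_add]

lemma card_tail_filter {n k : ℕ} (y : Fin n → X) (μ : CVec X (n + k)) :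
    (Finset.univ.filter fun t : Fin k → X =>
        countMap (n + k) (Fin.append y t) = μ).card = nuSub μ (countMap n y) := by
  set m := countMap n y with hm
  have hfront : ∀ t : Fin k → X, countMap n (fun i => Fin.append y t (Fin.castAdd k i)) = m := by
    intro t
    rw [hm]
    congr 1
    funext i
    exact Fin.append_left y t i
  have hcond : ∀ t : Fin k → X, countMap (n + k) (Fin.append y t) = μ ↔
      ∀ x, m.1 x + (countMap k (fun i => Fin.append y t (Fin.natAdd n i))).1 x = μ.1 x := by
    intro t
    constructor
    · intro h x
      rw [← congrFun (congrArg Subtype.val h) x, countMap_add_split, hfront]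
    · intro h
      apply Subtype.ext; funext x
      rw [countMap_add_split, hfront]
      exact h x
  by_cases hle : ∀ x, m.1 x ≤ μ.1 x
  · have hμ' : ∑ x, (μ.1 x - m.1 x) = k := by
      have h1 : ∑ x, ((μ.1 x - m.1 x) + m.1 x) = ∑ x, μ.1 x := by
        refine Finset.sum_congr rfl fun x _ => ?_
        have := hle x
        omega
      rw [Finset.sum_add_distrib, m.2, μ.2] at h1
      omega
    set μ' : CVec X k := ⟨fun x => μ.1 x - m.1 x, hμ'⟩ with hμ'def
    have heq : (Finset.univ.filter fun t : Fin k → X => countMap (n + k) (Fin.append y t) = μ)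
        = Finset.univ.filter fun t : Fin k → X =>
            countMap k (fun i => Fin.append y t (Fin.natAdd n i)) = μ' := by
      refine Finset.filter_congr fun t _ => ?_
      rw [hcond t]
      constructor
      · intro h
        apply Subtype.ext; funext x
        have := h x
        show (countMap k _).1 x = μ.1 x - m.1 x
        omega
      · intro h x
        have : (countMap k (fun i => Fin.append y t (Fin.natAdd n i))).1 x = μ.1 x - m.1 x :=
          congrFun (congrArg Subtype.val h) x
        have := hle x
        omega
    rw [heq]
    have : (Finset.univ.filter fun t : Fin k → X =>
        countMap k (fun i => Fin.append y t (Fin.natAdd n i)) = μ').card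
        = (Finset.univ.filter fun t : Fin k → X => countMap k t = μ').card := by
      refine Finset.card_bij (fun t _ => fun i => Fin.append y t (Fin.natAdd n i)) ?_ ?_ ?_
      · intro t ht
        simp only [Finset.mem_filter, Finset.mem_univ, true_and] at ht ⊢
        exact ht
      · intro a _ b _ h
        funext i
        have := congrFun h i
        simp only [Fin.append_right] at this
        exact this
      · intro t ht
        refine ⟨t, ?_, ?_⟩
        · simp only [Finset.mem_filter, Finset.mem_univ, true_and] at ht ⊢
          have he : (fun i => Fin.append y t (Fin.natAdd n i)) = t := by
            funext i
            exact Fin.append_right y t i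
          rw [he]
          exact ht
        · funext i
          exact Fin.append_right y t i
    rw [this, card_orbit μ', nuSub, if_pos hle]
    rfl
  · rw [nuSub, if_neg hle]
    push_neg at hle
    obtain ⟨x₀, hx₀⟩ := hle
    rw [Finset.card_eq_zero]
    refine Finset.filter_eq_empty_iff.mpr fun {t} _ h => ?_
    have := (hcond t).mp h x₀
    omega

/-- The key marginalization identity: the hypergeometric expectation of the cylindrical
extension. -/
lemma MuHy_cylExt {n k : ℕ} (f : (Fin n → X) → ℝ) (μ : CVec X (n + k)) :
    MuHy (cylExt f) μ
      = ∑ m : CVec X n, ((nu m : ℝ) * (nuSub μ m : ℝ) / (nu μ : ℝ)) * MuHy f m := by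
  have hcyl : ∀ (y : Fin n → X) (t : Fin k → X), cylExt f (Fin.append y t) = f y := by
    intro y t
    show f (fun i => Fin.append y t (Fin.castLE (Nat.le_add_right n k) i)) = f y
    congr 1
    funext i
    exact Fin.append_left y t i
  have hinner : ∀ y : Fin n → X,
      (∑ t : Fin k → X,
        if countMap (n+k) (Fin.append y t) = μ then cylExt f (Fin.append y t) else 0)
      = (nuSub μ (countMap n y) : ℝ) * f y := by
    intro y
    have hc : ∀ t : Fin k → X,
        (if countMap (n+k) (Fin.append y t) = μ then cylExt f (Fin.append y t) else 0)
        = (if countMap (n+k) (Fin.append y t) = μ then f y else 0) := by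
      intro t
      rw [hcyl]
    rw [Finset.sum_congr rfl (fun t _ => hc t), ← Finset.sum_filter, Finset.sum_const,
      card_tail_filter, nsmul_eq_mul]
  have hnum : ∑ w ∈ Finset.univ.filter (fun w : Fin (n+k) → X => countMap (n+k) w = μ),
      cylExt f w
      = ∑ m : CVec X n, (nuSub μ m : ℝ) * ((nu m : ℝ) * MuHy f m) := by
    have h1 : ∑ w ∈ Finset.univ.filter (fun w : Fin (n+k) → X => countMap (n+k) w = μ),
        cylExt f w
        = ∑ y : Fin n → X, (nuSub μ (countMap n y) : ℝ) * f y := by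
      rw [Finset.sum_filter,
        ← Fintype.sum_equiv (Fin.appendEquiv (α := X) n k)
          (fun p : (Fin n → X) × (Fin k → X) =>
            if countMap (n+k) (Fin.append p.1 p.2) = μ then cylExt f (Fin.append p.1 p.2) else 0)
          (fun w => if countMap (n+k) w = μ then cylExt f w else 0) (fun p => rfl),
        Fintype.sum_prod_type]
      exact Finset.sum_congr rfl fun y _ => hinner y
    rw [h1, ← Finset.sum_fiberwise (g := countMap n)
      (f := fun y => (nuSub μ (countMap n y) : ℝ) * f y)]
    refine Finset.sum_congr rfl fun m _ => ?_
    have hcg : ∀ y ∈ Finset.univ.filter (fun y => countMap n y = m),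
        (nuSub μ (countMap n y) : ℝ) * f y = (nuSub μ m : ℝ) * f y := fun y hy => by
      rw [(Finset.mem_filter.mp hy).2]
    rw [Finset.sum_congr rfl hcg, ← Finset.mul_sum, sum_orbit_eq]
  rw [MuHy, hnum, Finset.sum_div]
  refine Finset.sum_congr rfl fun m _ => ?_
  ring

/-! ### gbar lemmas -/

lemma MuHy_sub {N : ℕ} (f g : (Fin N → X) → ℝ) (m : CVec X N) :
    MuHy (f - g) m = MuHy f m - MuHy g m := by
  rw [MuHy, MuHy, MuHy, div_sub_div_same, ← Finset.sum_sub_distrib]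
  rfl

lemma gbar_eq_MuHy_cylExt {n k : ℕ} (f : (Fin n → X) → ℝ) (μ : CVec X (n + k)) :
    gbar (MuHy f) μ = MuHy (cylExt f) μ := by
  rw [gbar, MuHy_cylExt]

lemma gbar_const {n k : ℕ} (c : ℝ) (μ : CVec X (n + k)) :
    gbar (fun _ : CVec X n => c) μ = c := by
  have h := MuHy_cylExt (fun _ : Fin n → X => c) μ
  have h2 : cylExt (X := X) (n := n) (k := k) (fun _ : Fin n → X => c) = fun _ => c := rfl
  rw [h2, MuHy_const] at h
  simp only [MuHy_const] at h
  rw [gbar]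
  exact h.symm

lemma gbar_add {n k : ℕ} (g1 g2 : CVec X n → ℝ) (μ : CVec X (n + k)) :
    gbar (g1 + g2) μ = gbar g1 μ + gbar g2 μ := by
  rw [gbar, gbar, gbar, ← Finset.sum_add_distrib]
  refine Finset.sum_congr rfl fun m _ => ?_
  show _ * (g1 m + g2 m) = _
  ring

lemma gbar_smul {n k : ℕ} (l : ℝ) (g : CVec X n → ℝ) (μ : CVec X (n + k)) :
    gbar (fun m => l * g m) μ = l * gbar g μ := by
  rw [gbar, gbar, Finset.mul_sum]
  refine Finset.sum_congr rfl fun m _ => ?_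
  ring


end Aux

/-- a coherent exchangeable lower prevision on `ℒ(X^n)` extends to a coherent
exchangeable lower prevision on `ℒ(X^{n+k})` iff `max_μ ḡ(μ) ≥ Q^n(g)` for every gamble
`g` on `𝒩^n`. -/
theorem stmt17 {X : Type*} [Fintype X] [DecidableEq X] [Nonempty X] {n k : ℕ} (hn : 1 ≤ n)
    (P : ((Fin n → X) → ℝ) → ℝ)
    (hP : LowerPrevCoherent P) (hex : Exchangeable P)
    (Q : (CVec X n → ℝ) → ℝ)
    (hQ : ∀ h : CVec X n → ℝ, Q h = P (fun z => h (countMap n z))) :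
    (∃ E : ((Fin (n + k) → X) → ℝ) → ℝ,
        LowerPrevCoherent E ∧ Exchangeable E ∧
          ∀ f : (Fin n → X) → ℝ, P f ≤ E (cylExt f)) ↔
      ∀ g : CVec X n → ℝ, ∃ μ : CVec X (n + k), Q g ≤ gbar g μ := by
  constructor
  · rintro ⟨E, hEc, hEex, hEdom⟩ g
    obtain ⟨μs, _, hμs⟩ := Finset.exists_max_image (Finset.univ : Finset (CVec X (n + k)))
      (gbar g) Finset.univ_nonempty
    refine ⟨μs, ?_⟩
    have h1 : Q g = P (fun z => g (countMap n z)) := hQ g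
    have h2 : P (fun z => g (countMap n z)) ≤ E (cylExt (fun z => g (countMap n z))) := hEdom _
    have h3 : E (cylExt (fun z => g (countMap n z)))
        = E (fun w => MuHy (cylExt (fun z => g (countMap n z))) (countMap (n + k) w)) :=
      coh_exch_rep hEc hEex _
    have h4 : (fun w => MuHy (cylExt (fun z => g (countMap n z))) (countMap (n + k) w))
        = fun w => gbar g (countMap (n + k) w) := by
      funext w
      rw [MuHy_cylExt, gbar]
      exact Finset.sum_congr rfl fun m _ => by rw [MuHy_comp_count]
    have h5 : E (fun w => gbar g (countMap (n + k) w)) ≤ E (fun _ => gbar g μs) :=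
      coh_mono hEc fun w => hμs _ (Finset.mem_univ _)
    rw [coh_const hEc] at h5
    rw [h1]
    rw [h3, h4] at h2
    linarith
  · intro hmax
    classical
    set S : ((Fin (n + k) → X) → ℝ) → Set ℝ :=
      fun f => {r | ∃ g : CVec X n → ℝ, (∀ μ, gbar g μ ≤ MuHy f μ) ∧ r = Q g} with hSdef
    have hQadd : ∀ g1 g2 : CVec X n → ℝ, Q g1 + Q g2 ≤ Q (g1 + g2) := by
      intro g1 g2
      rw [hQ, hQ, hQ]
      exact hP.2.2 (fun z => g1 (countMap n z)) (fun z => g2 (countMap n z))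
    have hQsmul : ∀ (l : ℝ) (g : CVec X n → ℝ), 0 ≤ l → Q (fun m => l * g m) = l * Q g := by
      intro l g hl
      rw [hQ, hQ]
      exact hP.2.1 _ l hl
    have hQconst : ∀ c : ℝ, Q (fun _ => c) = c := fun c => by rw [hQ]; exact coh_const hP c
    have hmem : ∀ (f : (Fin (n + k) → X) → ℝ) (g : CVec X n → ℝ),
        (∀ μ, gbar g μ ≤ MuHy f μ) → Q g ∈ S f := fun f g h => ⟨g, h, rfl⟩
    have hbddS : ∀ f, BddAbove (S f) := by
      intro f
      obtain ⟨μM, _, hμM⟩ := Finset.exists_max_image (Finset.univ : Finset (CVec X (n + k)))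
        (fun μ => MuHy f μ) Finset.univ_nonempty
      refine ⟨MuHy f μM, ?_⟩
      rintro r ⟨g, hg, rfl⟩
      obtain ⟨μ0, hμ0⟩ := hmax g
      exact le_trans hμ0 (le_trans (hg μ0) (hμM μ0 (Finset.mem_univ _)))
    have hinfmem : ∀ f : (Fin (n + k) → X) → ℝ, sInf (Set.range f) ∈ S f := by
      intro f
      rw [← hQconst (sInf (Set.range f))]
      refine hmem f _ fun μ => ?_
      rw [gbar_const]
      exact le_MuHy (fun z => csInf_le (Set.Finite.bddBelow (Set.finite_range f)) ⟨z, rfl⟩) μ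
    have hneS : ∀ f, (S f).Nonempty := fun f => ⟨_, hinfmem f⟩
    refine ⟨fun f => sSup (S f), ⟨?_, ?_, ?_⟩, ?_, ?_⟩
    · intro f
      exact le_csSup (hbddS f) (hinfmem f)
    · intro f l hl
      rcases eq_or_lt_of_le hl with hl0 | hl0
      · subst hl0
        rw [zero_mul]
        have he : (fun ω => (0:ℝ) * f ω) = fun _ => (0:ℝ) := by funext ω; simp
        rw [he]
        refine le_antisymm (csSup_le (hneS _) ?_) ?_
        · rintro r ⟨g, hg, rfl⟩
          obtain ⟨μ0, hμ0⟩ := hmax g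
          have := hg μ0
          rw [MuHy_const] at this
          linarith
        · have h0 : Q (fun _ : CVec X n => (0:ℝ)) ∈ S (fun _ => (0:ℝ)) :=
            hmem _ _ fun μ => by rw [gbar_const, MuHy_const]
          have h1 := le_csSup (hbddS _) h0
          rwa [hQconst 0] at h1
      · have key1 : ∀ r ∈ S f, l * r ∈ S (fun ω => l * f ω) := by
          rintro r ⟨g, hg, rfl⟩
          refine ⟨fun m => l * g m, fun μ => ?_, (hQsmul l g hl).symm⟩
          rw [gbar_smul, MuHy_smul]
          exact mul_le_mul_of_nonneg_left (hg μ) hl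
        have key2 : ∀ r ∈ S (fun ω => l * f ω), (1 / l) * r ∈ S f := by
          rintro r ⟨g, hg, rfl⟩
          refine ⟨fun m => (1 / l) * g m, fun μ => ?_,
            (hQsmul (1 / l) g (by positivity)).symm⟩
          rw [gbar_smul]
          have h2 := hg μ
          rw [MuHy_smul] at h2
          calc (1 / l) * gbar g μ ≤ (1 / l) * (l * MuHy f μ) :=
                mul_le_mul_of_nonneg_left h2 (by positivity)
            _ = MuHy f μ := by field_simp
        have hle1 : sSup (S (fun ω => l * f ω)) ≤ l * sSup (S f) := by
          refine csSup_le (hneS _) fun r hr => ?_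
          have h1 : (1 / l) * r ≤ sSup (S f) := le_csSup (hbddS f) (key2 r hr)
          have h2 := mul_le_mul_of_nonneg_left h1 hl0.le
          calc r = l * ((1 / l) * r) := by field_simp
            _ ≤ l * sSup (S f) := h2
        have hge1 : l * sSup (S f) ≤ sSup (S (fun ω => l * f ω)) := by
          have h1 : sSup (S f) ≤ (1 / l) * sSup (S (fun ω => l * f ω)) := by
            refine csSup_le (hneS f) fun r hr => ?_
            have h2 : l * r ≤ sSup (S (fun ω => l * f ω)) :=
              le_csSup (hbddS _) (key1 r hr)
            have h3 := mul_le_mul_of_nonneg_left h2 (le_of_lt (by positivity : (0:ℝ) < 1 / l))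
            calc r = (1 / l) * (l * r) := by field_simp
              _ ≤ _ := h3
          have h2 := mul_le_mul_of_nonneg_left h1 hl0.le
          calc l * sSup (S f) ≤ l * ((1 / l) * sSup (S (fun ω => l * f ω))) := h2
            _ = sSup (S (fun ω => l * f ω)) := by field_simp
        exact le_antisymm hle1 hge1
    · intro f h
      have key : ∀ r ∈ S f, ∀ s ∈ S h, r + s ≤ sSup (S (f + h)) := by
        rintro r ⟨g1, hg1, rfl⟩ s ⟨g2, hg2, rfl⟩
        have hmem2 : Q (g1 + g2) ∈ S (f + h) :=
          ⟨g1 + g2, fun μ => by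
            rw [gbar_add, MuHy_add]
            exact add_le_add (hg1 μ) (hg2 μ), rfl⟩
        exact le_trans (hQadd g1 g2) (le_csSup (hbddS _) hmem2)
      have h1 : sSup (S f) ≤ sSup (S (f + h)) - sSup (S h) := by
        refine csSup_le (hneS f) fun r hr => ?_
        have h2 : sSup (S h) ≤ sSup (S (f + h)) - r :=
          csSup_le (hneS h) fun s hs => by linarith [key r hr s hs]
        linarith
      linarith
    · intro f π
      have he : (fun x => f (fun k => x (π k)) - f x)
          = (fun x => f (fun k => x (π k))) - f := rfl
      have hmem2 : Q (fun _ : CVec X n => (0:ℝ)) ∈ S (fun x => f (fun k => x (π k)) - f x) := by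
        refine hmem _ _ fun μ => ?_
        rw [gbar_const, he, MuHy_sub, MuHy_perm, sub_self]
      have := le_csSup (hbddS _) hmem2
      rwa [hQconst 0] at this
    · intro f
      have hmem2 : Q (MuHy f) ∈ S (cylExt f) := by
        refine hmem _ _ fun μ => ?_
        rw [gbar_eq_MuHy_cylExt]
      have hPf : Q (MuHy f) = P f := by
        rw [hQ]
        exact (coh_exch_rep hP hex f).symm
      have := le_csSup (hbddS _) hmem2
      rwa [hPf] at this
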